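/- For f ∈ L¹(0,∞) real-valued and every s > 0, ∫₀ˢ μ(t; f₊) dt = sup{ ∫ f·a dm : a measurable, 0 ≤ a ≤ 1, ∫ a dm = s }. -/

import Mathlib

open MeasureTheory Set
open scoped ENNReal

noncomputable def DD (g : ℝ → ℝ) (l : ℝ) : ℝ≥0∞ := volume ({x | l < g x} ∩ Set.Ioi 0)

noncomputable def rD (g : ℝ → ℝ) (t : ℝ) : ℝ :=
  sInf {l : ℝ | 0 ≤ l ∧ DD g l ≤ ENNReal.ofReal t}

lemma DD_eq_nu (g : ℝ → ℝ) (l : ℝ) :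
    DD g l = (volume.restrict (Set.Ioi (0:ℝ))) {x | l < g x} := by
  rw [Measure.restrict_apply' measurableSet_Ioi]; rfl

lemma DD_anti (g : ℝ → ℝ) {l₁ l₂ : ℝ} (h : l₁ ≤ l₂) : DD g l₂ ≤ DD g l₁ :=
  measure_mono (inter_subset_inter_left _ (fun x hx => lt_of_le_of_lt h hx))

lemma DD_lt_top {g : ℝ → ℝ} (hgi : IntegrableOn g (Set.Ioi 0)) {l : ℝ} (hl : 0 < l) :
    DD g l < ∞ := by
  rw [DD_eq_nu]; exact hgi.measure_gt_lt_top hl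

lemma DD_right (g : ℝ → ℝ) (l : ℝ) : DD g l = ⨆ n : ℕ, DD g (l + ((n:ℝ)+1)⁻¹) := by
  have hU : {x | l < g x} ∩ Set.Ioi 0 = ⋃ n : ℕ, ({x | l + ((n:ℝ)+1)⁻¹ < g x} ∩ Set.Ioi 0) := by
    ext x
    simp only [mem_inter_iff, mem_iUnion, mem_setOf_eq]
    constructor
    · rintro ⟨hx, hx0⟩
      obtain ⟨n, hn⟩ := exists_nat_one_div_lt (sub_pos.mpr hx)
      refine ⟨n, ⟨?_, hx0⟩⟩
      rw [one_div] at hn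
      linarith
    · rintro ⟨n, hn, hx0⟩
      refine ⟨lt_of_le_of_lt ?_ hn, hx0⟩
      have : (0:ℝ) < ((n:ℝ)+1)⁻¹ := by positivity
      linarith
  have hmono : Monotone (fun n : ℕ => ({x | l + ((n:ℝ)+1)⁻¹ < g x} ∩ Set.Ioi (0:ℝ))) := by
    intro m n hmn
    apply inter_subset_inter_left
    intro x hx
    simp only [mem_setOf_eq] at hx ⊢
    have : ((n:ℝ)+1)⁻¹ ≤ ((m:ℝ)+1)⁻¹ := by
      apply inv_anti₀ (by positivity)
      have := (Nat.cast_le (α := ℝ)).mpr hmn; linarith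
    linarith
  rw [show DD g l = volume ({x | l < g x} ∩ Set.Ioi 0) from rfl, hU]
  exact hmono.measure_iUnion

lemma exists_DD_le {g : ℝ → ℝ} (hg : AEMeasurable g (volume.restrict (Set.Ioi 0)))
    (hgi : IntegrableOn g (Set.Ioi 0)) {t : ℝ} (ht : 0 < t) :
    ∃ l, 0 ≤ l ∧ DD g l ≤ ENNReal.ofReal t := by
  set ν := volume.restrict (Set.Ioi (0:ℝ))
  set C := ∫⁻ x, ENNReal.ofReal (g x) ∂ν with hC
  have hCfin : C ≠ ∞ := hgi.lintegral_lt_top.ne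
  set l := max 1 (C.toReal / t) with hl
  have hl1 : (1:ℝ) ≤ l := le_max_left _ _
  have hl0 : 0 < l := lt_of_lt_of_le one_pos hl1
  refine ⟨l, le_of_lt hl0, ?_⟩
  have markov : ENNReal.ofReal l * ν {x | ENNReal.ofReal l ≤ ENNReal.ofReal (g x)} ≤ C :=
    mul_meas_ge_le_lintegral₀ (hg.ennreal_ofReal) _
  have hsub : DD g l ≤ ν {x | ENNReal.ofReal l ≤ ENNReal.ofReal (g x)} := by
    rw [DD_eq_nu]
    apply measure_mono
    intro x hx
    simp only [mem_setOf_eq] at hx ⊢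
    exact ENNReal.ofReal_le_ofReal (le_of_lt hx)
  have h2 : ENNReal.ofReal l * DD g l ≤ C :=
    le_trans (mul_le_mul_right hsub _) markov
  -- conclude DD g l ≤ ofReal t
  have hCle : C ≤ ENNReal.ofReal (t * l) := by
    rw [← ENNReal.ofReal_toReal hCfin]
    apply ENNReal.ofReal_le_ofReal
    have h3 : C.toReal / t ≤ l := le_max_right _ _
    calc C.toReal = t * (C.toReal / t) := by field_simp
    _ ≤ t * l := by nlinarith
  have hlne : ENNReal.ofReal l ≠ 0 := by
    simp [ENNReal.ofReal_eq_zero]; linarith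
  have := ENNReal.div_le_div_right h2 (ENNReal.ofReal l)
  rw [mul_div_assoc, ENNReal.mul_div_cancel hlne ENNReal.ofReal_ne_top] at this
  calc DD g l ≤ C / ENNReal.ofReal l := this
  _ ≤ ENNReal.ofReal (t * l) / ENNReal.ofReal l := ENNReal.div_le_div_right hCle _
  _ = ENNReal.ofReal t := by
      rw [ENNReal.ofReal_mul (le_of_lt ht), mul_comm, mul_div_assoc]
      exact ENNReal.mul_div_cancel hlne ENNReal.ofReal_ne_top

lemma rD_nonneg (g : ℝ → ℝ) (t : ℝ) : 0 ≤ rD g t :=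
  Real.sInf_nonneg (fun _ hx => hx.1)

lemma rD_le_iff {g : ℝ → ℝ} (hg : AEMeasurable g (volume.restrict (Set.Ioi 0)))
    (hgi : IntegrableOn g (Set.Ioi 0)) {t l : ℝ} (ht : 0 < t) (hl : 0 ≤ l) :
    rD g t ≤ l ↔ DD g l ≤ ENNReal.ofReal t := by
  constructor
  · intro h
    rw [DD_right]
    apply iSup_le
    intro n
    have hlt : rD g t < l + ((n:ℝ)+1)⁻¹ := lt_of_le_of_lt h (by
      have : (0:ℝ) < ((n:ℝ)+1)⁻¹ := by positivity
      linarith)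
    obtain ⟨l₀, hl₀⟩ := exists_DD_le hg hgi ht
    obtain ⟨u, hu, hu2⟩ := exists_lt_of_csInf_lt ⟨l₀, hl₀⟩ hlt
    exact le_trans (DD_anti g (le_of_lt hu2)) hu.2
  · intro h
    exact csInf_le ⟨0, fun x hx => hx.1⟩ ⟨hl, h⟩

lemma rD_anti {g : ℝ → ℝ} (hg : AEMeasurable g (volume.restrict (Set.Ioi 0)))
    (hgi : IntegrableOn g (Set.Ioi 0)) : AntitoneOn (rD g) (Set.Ioi 0) := by
  intro t₁ h₁ t₂ _ h12
  apply csInf_le_csInf ⟨0, fun x hx => hx.1⟩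
  · obtain ⟨l₀, hl₀⟩ := exists_DD_le hg hgi h₁
    exact ⟨l₀, hl₀⟩
  · rintro l ⟨hl0, hl⟩
    exact ⟨hl0, le_trans hl (ENNReal.ofReal_le_ofReal h12)⟩

lemma vol_Ioc_lip {E : Set ℝ} {a b : ℝ} (hab : a ≤ b) :
    volume (E ∩ Set.Ioc 0 b) ≤ volume (E ∩ Set.Ioc 0 a) + ENNReal.ofReal (b - a) := by
  have hsub : E ∩ Set.Ioc 0 b ⊆ (E ∩ Set.Ioc 0 a) ∪ Set.Ioc a b := by
    rintro x ⟨hxE, hx0, hxb⟩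
    rcases le_or_gt x a with h | h
    · exact Or.inl ⟨hxE, hx0, h⟩
    · exact Or.inr ⟨h, hxb⟩
  calc volume (E ∩ Set.Ioc 0 b) ≤ volume ((E ∩ Set.Ioc 0 a) ∪ Set.Ioc a b) := measure_mono hsub
  _ ≤ volume (E ∩ Set.Ioc 0 a) + volume (Set.Ioc a b) := measure_union_le _ _
  _ = volume (E ∩ Set.Ioc 0 a) + ENNReal.ofReal (b - a) := by rw [Real.volume_Ioc]

lemma exists_subset_volume_eq {E : Set ℝ} (hE : MeasurableSet E) (hE0 : E ⊆ Set.Ioi 0)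
    {r : ℝ≥0∞} (hr : r ≤ volume E) (hr' : r ≠ ⊤) :
    ∃ F, F ⊆ E ∧ MeasurableSet F ∧ volume F = r := by
  rcases eq_or_lt_of_le hr with heq | hlt
  · exact ⟨E, Subset.rfl, hE, heq.symm⟩
  set φ : ℝ → ℝ := fun t => (volume (E ∩ Set.Ioc 0 t)).toReal with hφ
  have hfin : ∀ t : ℝ, volume (E ∩ Set.Ioc 0 t) ≠ ⊤ := by
    intro t
    exact (lt_of_le_of_lt (measure_mono inter_subset_right)
      (by rw [Real.volume_Ioc]; exact ENNReal.ofReal_lt_top)).ne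
  have hmono : Monotone φ := by
    intro a b hab
    exact ENNReal.toReal_le_toReal (hfin a) (hfin b) |>.mpr
      (measure_mono (inter_subset_inter_right _ (Set.Ioc_subset_Ioc_right hab)))
  have hlipd : ∀ a b : ℝ, a ≤ b → φ b - φ a ≤ b - a := by
    intro a b hab
    have h1 := vol_Ioc_lip (E := E) hab
    have h2 : φ b ≤ φ a + (b - a) := by
      have := ENNReal.toReal_le_toReal (hfin b)
        (by exact ENNReal.add_ne_top.mpr ⟨hfin a, ENNReal.ofReal_ne_top⟩) |>.mpr h1
      rwa [ENNReal.toReal_add (hfin a) ENNReal.ofReal_ne_top,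
        ENNReal.toReal_ofReal (by linarith)] at this
    linarith
  have hcont : Continuous φ := by
    apply LipschitzWith.continuous (K := 1)
    intro a b
    rw [ENNReal.coe_one, one_mul, edist_dist, edist_dist, Real.dist_eq, Real.dist_eq]
    apply ENNReal.ofReal_le_ofReal
    rcases le_total a b with h | h
    · rw [abs_of_nonpos (by linarith [hmono h] : φ a - φ b ≤ 0), abs_of_nonpos (by linarith)]
      linarith [hlipd a b h]
    · rw [abs_of_nonneg (by linarith [hmono h] : 0 ≤ φ a - φ b), abs_of_nonneg (by linarith)]
      linarith [hlipd b a h]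
  -- find n with r < volume (E ∩ Ioc 0 n)
  have hEU : E = ⋃ n : ℕ, E ∩ Set.Ioc 0 (n : ℝ) := by
    ext x
    simp only [mem_iUnion, mem_inter_iff, mem_Ioc]
    constructor
    · intro hx
      obtain ⟨n, hn⟩ := exists_nat_ge x
      exact ⟨n, hx, hE0 hx, hn⟩
    · rintro ⟨n, hx, _⟩; exact hx
  have hmonoU : Monotone (fun n : ℕ => E ∩ Set.Ioc 0 (n : ℝ)) := by
    intro m n hmn
    exact inter_subset_inter_right _ (Set.Ioc_subset_Ioc_right (Nat.cast_le.mpr hmn))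
  have hsup : volume E = ⨆ n : ℕ, volume (E ∩ Set.Ioc 0 (n : ℝ)) := by
    conv_lhs => rw [hEU]
    exact hmonoU.measure_iUnion
  rw [hsup] at hlt
  obtain ⟨n, hn⟩ := lt_iSup_iff.mp hlt
  -- IVT
  have h0n : (0:ℝ) ≤ (n:ℝ) := Nat.cast_nonneg n
  have hφ0 : φ 0 = 0 := by simp [hφ]
  have hrn : r.toReal ∈ Set.Icc (φ 0) (φ (n:ℝ)) := by
    constructor
    · rw [hφ0]; exact ENNReal.toReal_nonneg
    · exact (ENNReal.toReal_le_toReal hr' (hfin _)).mpr (le_of_lt hn)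
  obtain ⟨t, _, htv⟩ := intermediate_value_Icc h0n hcont.continuousOn hrn
  refine ⟨E ∩ Set.Ioc 0 t, inter_subset_left, hE.inter measurableSet_Ioc, ?_⟩
  have : (volume (E ∩ Set.Ioc 0 t)).toReal = r.toReal := htv
  exact (ENNReal.toReal_eq_toReal_iff' (hfin t) hr').mp this

lemma slice_eq {g : ℝ → ℝ} (hg : AEMeasurable g (volume.restrict (Set.Ioi 0)))
    (hgi : IntegrableOn g (Set.Ioi 0)) {l s : ℝ} (hl : 0 ≤ l) (hs : 0 < s) :
    volume ({t | l < rD g t} ∩ Set.Ioc 0 s) = min (ENNReal.ofReal s) (DD g l) := by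
  have hset : {t | l < rD g t} ∩ Set.Ioc 0 s
      = {t | t ∈ Set.Ioc 0 s ∧ ENNReal.ofReal t < DD g l} := by
    ext t
    simp only [mem_inter_iff, mem_setOf_eq, mem_Ioc]
    constructor
    · rintro ⟨h1, h2⟩
      refine ⟨h2, ?_⟩
      by_contra hc
      push_neg at hc
      exact absurd ((rD_le_iff hg hgi h2.1 hl).mpr hc) (not_le.mpr h1)
    · rintro ⟨h2, h1⟩
      refine ⟨?_, h2⟩
      by_contra hc
      push_neg at hc
      exact absurd ((rD_le_iff hg hgi h2.1 hl).mp hc) (not_le.mpr h1)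
  rw [hset]
  rcases eq_or_ne (DD g l) ⊤ with htop | hne
  · rw [htop]
    have : {t | t ∈ Set.Ioc 0 s ∧ ENNReal.ofReal t < (⊤:ℝ≥0∞)} = Set.Ioc 0 s := by
      ext t; simp [ENNReal.ofReal_lt_top]
    rw [this, Real.volume_Ioc, min_eq_left (by simp)]
    simp
  · set c := (DD g l).toReal with hc
    have hcofReal : DD g l = ENNReal.ofReal c := (ENNReal.ofReal_toReal hne).symm
    have hc0 : 0 ≤ c := ENNReal.toReal_nonneg
    have hseteq : {t | t ∈ Set.Ioc 0 s ∧ ENNReal.ofReal t < DD g l}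
        = Set.Ioc 0 s ∩ Set.Iio c := by
      ext t
      simp only [mem_inter_iff, mem_setOf_eq, mem_Ioc, mem_Iio]
      constructor
      · rintro ⟨h1, h2⟩
        refine ⟨h1, ?_⟩
        rw [hcofReal] at h2
        exact (ENNReal.ofReal_lt_ofReal_iff_of_nonneg (le_of_lt h1.1)).mp h2
      · rintro ⟨h1, h2⟩
        refine ⟨h1, ?_⟩
        rw [hcofReal]
        exact ENNReal.ofReal_lt_ofReal_iff_of_nonneg (le_of_lt h1.1) |>.mpr h2
    rw [hseteq, hcofReal]
    rcases le_total s c with h | h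
    · have hle : volume (Set.Ioc 0 s ∩ Set.Iio c) ≤ ENNReal.ofReal s := by
        calc volume (Set.Ioc 0 s ∩ Set.Iio c) ≤ volume (Set.Ioc 0 s) :=
          measure_mono inter_subset_left
        _ = ENNReal.ofReal s := by rw [Real.volume_Ioc]; simp
      have hge : ENNReal.ofReal s ≤ volume (Set.Ioc 0 s ∩ Set.Iio c) := by
        have hsub : Set.Ioo 0 s ⊆ Set.Ioc 0 s ∩ Set.Iio c := by
          rintro t ⟨h1, h2⟩
          exact ⟨⟨h1, le_of_lt h2⟩, lt_of_lt_of_le h2 h⟩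
        calc ENNReal.ofReal s = volume (Set.Ioo 0 s) := by rw [Real.volume_Ioo]; simp
        _ ≤ _ := measure_mono hsub
      rw [le_antisymm hle hge, min_eq_left (ENNReal.ofReal_le_ofReal (by linarith))]
    · have : Set.Ioc 0 s ∩ Set.Iio c = Set.Ioo 0 c := by
        ext t
        simp only [mem_inter_iff, mem_Ioc, mem_Iio, mem_Ioo]
        constructor
        · rintro ⟨⟨h1, _⟩, h3⟩; exact ⟨h1, h3⟩
        · rintro ⟨h1, h2⟩; exact ⟨⟨h1, by linarith⟩, h2⟩
      rw [this, Real.volume_Ioo, min_eq_right]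
      · simp
      · exact ENNReal.ofReal_le_ofReal (by linarith)

noncomputable def Phi (g : ℝ → ℝ) (s : ℝ) : ℝ≥0∞ :=
  ∫⁻ l in Set.Ioi (0:ℝ), min (ENNReal.ofReal s) (DD g l)

lemma Psi_eq {g : ℝ → ℝ} (hg : AEMeasurable g (volume.restrict (Set.Ioi 0)))
    (h0 : ∀ x, 0 ≤ g x) :
    ∫⁻ l in Set.Ioi (0:ℝ), DD g l
      = ∫⁻ x, ENNReal.ofReal (g x) ∂(volume.restrict (Set.Ioi 0)) := by
  rw [lintegral_eq_lintegral_meas_lt (volume.restrict (Set.Ioi 0))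
    (Filter.Eventually.of_forall h0) hg]
  apply setLIntegral_congr_fun measurableSet_Ioi
  intro l _
  rw [DD_eq_nu]

lemma Phi_lt_top {g : ℝ → ℝ} (hg : AEMeasurable g (volume.restrict (Set.Ioi 0)))
    (h0 : ∀ x, 0 ≤ g x) (hgi : IntegrableOn g (Set.Ioi 0)) (s : ℝ) :
    Phi g s < ⊤ := by
  calc Phi g s ≤ ∫⁻ l in Set.Ioi (0:ℝ), DD g l :=
    lintegral_mono (fun l => min_le_right _ _)
  _ = ∫⁻ x, ENNReal.ofReal (g x) ∂(volume.restrict (Set.Ioi 0)) := Psi_eq hg h0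
  _ < ⊤ := hgi.lintegral_lt_top

lemma lint_rD {g : ℝ → ℝ} (hg : AEMeasurable g (volume.restrict (Set.Ioi 0)))
    (hgi : IntegrableOn g (Set.Ioi 0)) {s : ℝ} (hs : 0 < s) :
    ∫⁻ t in Set.Ioc (0:ℝ) s, ENNReal.ofReal (rD g t) = Phi g s := by
  have haem : AEMeasurable (rD g) (volume.restrict (Set.Ioc 0 s)) :=
    aemeasurable_restrict_of_antitoneOn measurableSet_Ioc
      ((rD_anti hg hgi).mono (Set.Ioc_subset_Ioi_self))
  rw [lintegral_eq_lintegral_meas_lt (volume.restrict (Set.Ioc 0 s))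
    (Filter.Eventually.of_forall (fun t => rD_nonneg g t)) haem]
  apply setLIntegral_congr_fun measurableSet_Ioi
  intro l hl
  dsimp only
  rw [Measure.restrict_apply' measurableSet_Ioc, slice_eq hg hgi (le_of_lt hl) hs]

lemma integral_rD {g : ℝ → ℝ} (hg : AEMeasurable g (volume.restrict (Set.Ioi 0)))
    (h0 : ∀ x, 0 ≤ g x) (hgi : IntegrableOn g (Set.Ioi 0)) {s : ℝ} (hs : 0 < s) :
    ∫ t in Set.Ioc (0:ℝ) s, rD g t = (Phi g s).toReal := by
  have haem : AEMeasurable (rD g) (volume.restrict (Set.Ioc 0 s)) :=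
    aemeasurable_restrict_of_antitoneOn measurableSet_Ioc
      ((rD_anti hg hgi).mono (Set.Ioc_subset_Ioi_self))
  rw [integral_eq_lintegral_of_nonneg_ae
    (Filter.Eventually.of_forall (fun t => rD_nonneg g t)) haem.aestronglyMeasurable,
    lint_rD hg hgi hs]

lemma integrableOn_rD {g : ℝ → ℝ} (hg : AEMeasurable g (volume.restrict (Set.Ioi 0)))
    (h0 : ∀ x, 0 ≤ g x) (hgi : IntegrableOn g (Set.Ioi 0)) {s : ℝ} (hs : 0 < s) :
    IntegrableOn (rD g) (Set.Ioc 0 s) := by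
  have haem : AEMeasurable (rD g) (volume.restrict (Set.Ioc 0 s)) :=
    aemeasurable_restrict_of_antitoneOn measurableSet_Ioc
      ((rD_anti hg hgi).mono (Set.Ioc_subset_Ioi_self))
  refine ⟨haem.aestronglyMeasurable, ?_⟩
  rw [hasFiniteIntegral_iff_norm]
  have : ∀ t : ℝ, ENNReal.ofReal ‖rD g t‖ = ENNReal.ofReal (rD g t) := by
    intro t; rw [Real.norm_eq_abs, abs_of_nonneg (rD_nonneg g t)]
  simp_rw [this]
  rw [lint_rD hg hgi hs]
  exact Phi_lt_top hg h0 hgi s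

lemma lint_mul_le {g a : ℝ → ℝ} (hg : Measurable g) (h0 : ∀ x, 0 ≤ g x)
    (ha : Measurable a) (ha01 : ∀ t, a t ∈ Set.Icc (0:ℝ) 1)
    (hai : IntegrableOn a (Set.Ioi 0)) {s : ℝ}
    (has : ∫ t in Set.Ioi (0:ℝ), a t = s) :
    ∫⁻ x, ENNReal.ofReal (g x * a x) ∂(volume.restrict (Set.Ioi 0)) ≤ Phi g s := by
  set ν := volume.restrict (Set.Ioi (0:ℝ)) with hν
  set F : ℝ → ℝ → ℝ≥0∞ :=
    fun x l => ENNReal.ofReal (a x) * (Set.Ioo (0:ℝ) (g x)).indicator (1 : ℝ → ℝ≥0∞) l with hF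
  have step1 : ∀ x, ∫⁻ l, F x l = ENNReal.ofReal (g x * a x) := by
    intro x
    simp only [hF]
    rw [lintegral_const_mul' _ _ ENNReal.ofReal_ne_top,
      lintegral_indicator_one measurableSet_Ioo,
      Real.volume_Ioo, sub_zero, mul_comm (g x) (a x), ENNReal.ofReal_mul (ha01 x).1]
  have hM : MeasurableSet {p : ℝ × ℝ | 0 < p.2 ∧ p.2 < g p.1} := by
    apply MeasurableSet.inter
    · exact measurableSet_lt measurable_const measurable_snd
    · exact measurableSet_lt measurable_snd (hg.comp measurable_fst)
  have hFm : AEMeasurable (Function.uncurry F) (ν.prod volume) := by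
    have huncurry : Function.uncurry F = fun p : ℝ × ℝ =>
        ENNReal.ofReal (a p.1) * ({p : ℝ × ℝ | 0 < p.2 ∧ p.2 < g p.1}).indicator
          (1 : ℝ × ℝ → ℝ≥0∞) p := by
      ext p
      simp only [Function.uncurry, hF, Set.indicator_apply, mem_Ioo, mem_setOf_eq, Pi.one_apply]
    rw [huncurry]
    exact ((ENNReal.measurable_ofReal.comp (ha.comp measurable_fst)).mul
      (measurable_one.indicator hM)).aemeasurable
  have swap : ∫⁻ x, ENNReal.ofReal (g x * a x) ∂ν
      = ∫⁻ l, ∫⁻ x, F x l ∂ν ∂volume := by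
    calc ∫⁻ x, ENNReal.ofReal (g x * a x) ∂ν = ∫⁻ x, ∫⁻ l, F x l ∂volume ∂ν :=
      lintegral_congr (fun x => (step1 x).symm)
    _ = ∫⁻ l, ∫⁻ x, F x l ∂ν ∂volume := lintegral_lintegral_swap hFm
  have hzero : ∀ l : ℝ, l ∉ Set.Ioi (0:ℝ) → ∫⁻ x, F x l ∂ν = 0 := by
    intro l hl
    simp only [mem_Ioi, not_lt] at hl
    have hz : ∀ x, F x l = 0 := by
      intro x
      simp only [hF, Set.indicator_apply, mem_Ioo, Pi.one_apply]
      rw [if_neg (by intro h; linarith), mul_zero]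
    simp [hz]
  have houter : ∫⁻ l, ∫⁻ x, F x l ∂ν ∂volume = ∫⁻ l in Set.Ioi (0:ℝ), ∫⁻ x, F x l ∂ν := by
    rw [← lintegral_indicator measurableSet_Ioi]
    congr 1
    ext l
    by_cases hl : l ∈ Set.Ioi (0:ℝ)
    · rw [Set.indicator_of_mem hl]
    · rw [Set.indicator_of_notMem hl, hzero l hl]
  have hinner : ∀ l : ℝ, 0 < l → ∫⁻ x, F x l ∂ν ≤ min (ENNReal.ofReal s) (DD g l) := by
    intro l hl
    have hrw : ∀ x, F x l = Set.indicator {x : ℝ | l < g x}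
        (fun x => ENNReal.ofReal (a x)) x := by
      intro x
      simp only [hF, Set.indicator_apply, mem_Ioo, mem_setOf_eq, Pi.one_apply]
      by_cases hx : l < g x
      · simp [hx, hl]
      · simp [hx]
    simp_rw [hrw]
    rw [lintegral_indicator (measurableSet_lt measurable_const hg)]
    apply le_min
    · calc ∫⁻ x in {x | l < g x}, ENNReal.ofReal (a x) ∂ν
          ≤ ∫⁻ x, ENNReal.ofReal (a x) ∂ν := setLIntegral_le_lintegral _ _
      _ = ENNReal.ofReal (∫ x, a x ∂ν) :=
          (ofReal_integral_eq_lintegral_ofReal hai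
            (Filter.Eventually.of_forall (fun x => (ha01 x).1))).symm
      _ = ENNReal.ofReal s := by rw [has]
    · calc ∫⁻ x in {x | l < g x}, ENNReal.ofReal (a x) ∂ν
          ≤ ∫⁻ _ in {x | l < g x}, 1 ∂ν :=
          lintegral_mono (fun x => ENNReal.ofReal_le_one.mpr (ha01 x).2)
      _ = ν {x | l < g x} := setLIntegral_one _
      _ = DD g l := (DD_eq_nu g l).symm
  calc ∫⁻ x, ENNReal.ofReal (g x * a x) ∂ν = ∫⁻ l in Set.Ioi (0:ℝ), ∫⁻ x, F x l ∂ν := by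
        rw [swap, houter]
  _ ≤ Phi g s := setLIntegral_mono' measurableSet_Ioi (fun l hl => hinner l hl)

lemma upper_bound {f' : ℝ → ℝ} (hf' : Measurable f') (hfi : IntegrableOn f' (Set.Ioi 0))
    {s : ℝ} (hs : 0 < s) {a : ℝ → ℝ} (ha : Measurable a)
    (ha01 : ∀ t, a t ∈ Set.Icc (0:ℝ) 1) (has : ∫ t in Set.Ioi (0:ℝ), a t = s) :
    ∫ t in Set.Ioi (0:ℝ), f' t * a t ≤ (Phi (fun x => max (f' x) 0) s).toReal := by
  set ν := volume.restrict (Set.Ioi (0:ℝ)) with hν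
  set g : ℝ → ℝ := fun x => max (f' x) 0 with hgdef
  have hg : Measurable g := hf'.max measurable_const
  have h0 : ∀ x, 0 ≤ g x := fun x => le_max_right _ _
  have hgabs : ∀ x, ‖g x‖ ≤ ‖f' x‖ := by
    intro x
    rw [Real.norm_eq_abs, Real.norm_eq_abs, abs_of_nonneg (h0 x)]
    exact max_le (le_abs_self _) (abs_nonneg _)
  have hgi : IntegrableOn g (Set.Ioi 0) := by
    apply Integrable.mono hfi hg.aestronglyMeasurable
    filter_upwards with x
    exact hgabs x
  have hai : IntegrableOn a (Set.Ioi 0) := by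
    by_contra h
    rw [integral_undef h] at has
    linarith
  have habs : ∀ x, ‖a x‖ ≤ 1 := by
    intro x
    rw [Real.norm_eq_abs, abs_of_nonneg (ha01 x).1]
    exact (ha01 x).2
  have hfa : Integrable (fun x => f' x * a x) ν := by
    apply Integrable.mono hfi ((hf'.mul ha).aestronglyMeasurable)
    filter_upwards with x
    rw [Pi.mul_apply, norm_mul]
    calc ‖f' x‖ * ‖a x‖ ≤ ‖f' x‖ * 1 :=
          mul_le_mul_of_nonneg_left (habs x) (norm_nonneg _)
    _ = ‖f' x‖ := mul_one _
  have hga : Integrable (fun x => g x * a x) ν := by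
    apply Integrable.mono hfi ((hg.mul ha).aestronglyMeasurable)
    filter_upwards with x
    rw [Pi.mul_apply, norm_mul]
    calc ‖g x‖ * ‖a x‖ ≤ ‖f' x‖ * 1 :=
          mul_le_mul (hgabs x) (habs x) (norm_nonneg _) (norm_nonneg _)
    _ = ‖f' x‖ := mul_one _
  calc ∫ t in Set.Ioi (0:ℝ), f' t * a t ≤ ∫ t, g t * a t ∂ν := by
        apply integral_mono hfa hga
        intro x
        exact mul_le_mul_of_nonneg_right (le_max_left _ _) (ha01 x).1
  _ = (∫⁻ x, ENNReal.ofReal (g x * a x) ∂ν).toReal := by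
        rw [integral_eq_lintegral_of_nonneg_ae
          (Filter.Eventually.of_forall (fun x => mul_nonneg (h0 x) (ha01 x).1))
          ((hg.mul ha).aestronglyMeasurable)]
  _ ≤ (Phi g s).toReal := by
        apply ENNReal.toReal_mono (Phi_lt_top hg.aemeasurable h0 hgi s).ne
        exact lint_mul_le hg h0 ha ha01 hai has

lemma lower_bound_pos {f' : ℝ → ℝ} (hf' : Measurable f') (hfi : IntegrableOn f' (Set.Ioi 0))
    {s : ℝ} (hs : 0 < s)
    (hpos : 0 < rD (fun x => max (f' x) 0) s) :
    ∃ a : ℝ → ℝ, Measurable a ∧ (∀ t, a t ∈ Set.Icc (0:ℝ) 1) ∧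
      (∫ t in Set.Ioi (0:ℝ), a t) = s ∧
      (∫ t in Set.Ioi (0:ℝ), f' t * a t) = (Phi (fun x => max (f' x) 0) s).toReal := by
  set ν := volume.restrict (Set.Ioi (0:ℝ)) with hν
  set g : ℝ → ℝ := fun x => max (f' x) 0 with hgdef
  have hg : Measurable g := hf'.max measurable_const
  have h0 : ∀ x, 0 ≤ g x := fun x => le_max_right _ _
  have hgabs : ∀ x, ‖g x‖ ≤ ‖f' x‖ := by
    intro x
    rw [Real.norm_eq_abs, Real.norm_eq_abs, abs_of_nonneg (h0 x)]
    exact max_le (le_abs_self _) (abs_nonneg _)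
  have hgi : IntegrableOn g (Set.Ioi 0) := by
    apply Integrable.mono hfi hg.aestronglyMeasurable
    filter_upwards with x
    exact hgabs x
  set L : ℝ := rD g s with hL
  have hL0 : 0 ≤ L := rD_nonneg g s
  have hDL : DD g L ≤ ENNReal.ofReal s :=
    (rD_le_iff hg.aemeasurable hgi hs hL0).mp le_rfl
  have hDlt : ∀ l, 0 ≤ l → l < L → ENNReal.ofReal s < DD g l := by
    intro l hl0 hlL
    by_contra hc
    push_neg at hc
    exact absurd ((rD_le_iff hg.aemeasurable hgi hs hl0).mpr hc) (not_le.mpr hlL)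
  set A : Set ℝ := {x | L < g x} ∩ Set.Ioi 0 with hAdef
  set B : Set ℝ := {x | L ≤ g x} ∩ Set.Ioi 0 with hBdef
  have hA : MeasurableSet A := (measurableSet_lt measurable_const hg).inter measurableSet_Ioi
  have hB : MeasurableSet B := (measurableSet_le measurable_const hg).inter measurableSet_Ioi
  have hvolA : volume A = DD g L := rfl
  have hvolA_le : volume A ≤ ENNReal.ofReal s := hDL
  have hvolA_fin : volume A ≠ ⊤ := (lt_of_le_of_lt hvolA_le ENNReal.ofReal_lt_top).ne
  have hAB : A ⊆ B := inter_subset_inter_left _ (fun x (hx : L < g x) => (le_of_lt hx : L ≤ g x))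
  -- volume B ≥ ofReal s
  have hvolB : ENNReal.ofReal s ≤ volume B := by
    have hBi : B = ⋂ n : ℕ, ({x | L - L/((n:ℝ)+1) < g x} ∩ Set.Ioi 0) := by
      ext x
      simp only [hBdef, mem_inter_iff, mem_iInter, mem_setOf_eq]
      constructor
      · rintro ⟨hx, hx0⟩
        intro n
        refine ⟨lt_of_lt_of_le ?_ hx, hx0⟩
        have : 0 < L/((n:ℝ)+1) := by positivity
        linarith
      · intro hx
        refine ⟨?_, (hx 0).2⟩
        by_contra hc
        push_neg at hc
        obtain ⟨n, hn⟩ := exists_nat_one_div_lt (div_pos (sub_pos.mpr hc) hpos)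
        have h2 := (hx n).1
        rw [one_div] at hn
        have h3 : L * ((n:ℝ)+1)⁻¹ < L * ((L - g x)/L) :=
          mul_lt_mul_of_pos_left hn hpos
        rw [mul_div_cancel₀ _ (ne_of_gt hpos)] at h3
        have : L / ((n:ℝ)+1) = L * ((n:ℝ)+1)⁻¹ := div_eq_mul_inv _ _
        linarith
    rw [hBi]
    have hanti : Antitone (fun n : ℕ => ({x | L - L/((n:ℝ)+1) < g x} ∩ Set.Ioi (0:ℝ))) := by
      intro m n hmn
      apply inter_subset_inter_left
      intro x hx
      simp only [mem_setOf_eq] at hx ⊢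
      have h1 : L/((n:ℝ)+1) ≤ L/((m:ℝ)+1) := by
        apply div_le_div_of_nonneg_left (le_of_lt hpos) (by positivity)
        have := (Nat.cast_le (α := ℝ)).mpr hmn
        linarith
      linarith
    rw [hanti.measure_iInter (fun n => ((measurableSet_lt measurable_const hg).inter
      measurableSet_Ioi).nullMeasurableSet) ?fin]
    · apply le_iInf
      intro n
      apply le_of_lt
      apply hDlt
      · have h1 : L/((n:ℝ)+1) ≤ L := by
          rw [div_le_iff₀ (by positivity : (0:ℝ) < (n:ℝ)+1)]
          nlinarith [Nat.cast_nonneg (α := ℝ) n]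
        linarith
      · have : 0 < L/((n:ℝ)+1) := by positivity
        linarith
    case fin =>
      refine ⟨1, ?_⟩
      show DD g (L - L/(((1:ℕ):ℝ)+1)) ≠ ⊤
      have h1 : (0:ℝ) < L - L/(((1:ℕ):ℝ)+1) := by
        push_cast
        have h2 : L/(1+1) < L := by
          rw [div_lt_iff₀ (by norm_num : (0:ℝ) < 1+1)]
          nlinarith
        linarith
      exact (DD_lt_top hgi h1).ne
  -- extract the sliver F
  have hBA_sub : B \ A ⊆ Set.Ioi 0 := fun x hx => hx.1.2
  have hBA_vol : ENNReal.ofReal s - volume A ≤ volume (B \ A) := by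
    rw [measure_diff hAB hA.nullMeasurableSet hvolA_fin]
    exact tsub_le_tsub_right hvolB _
  obtain ⟨F, hFsub, hF, hFvol⟩ := exists_subset_volume_eq (hB.diff hA) hBA_sub hBA_vol
    (by
      apply ne_of_lt
      calc ENNReal.ofReal s - volume A ≤ ENNReal.ofReal s := tsub_le_self
      _ < ⊤ := ENNReal.ofReal_lt_top)
  set E : Set ℝ := A ∪ F with hEdef
  have hE : MeasurableSet E := hA.union hF
  have hdisj : Disjoint A F :=
    Disjoint.mono_right hFsub disjoint_sdiff_right
  have hEsub : E ⊆ Set.Ioi 0 := by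
    rintro x (hx | hx)
    · exact hx.2
    · exact hBA_sub (hFsub hx)
  have hEB : E ⊆ B := by
    rintro x (hx | hx)
    · exact hAB hx
    · exact (hFsub hx).1
  have hvolE : volume E = ENNReal.ofReal s := by
    rw [hEdef, measure_union hdisj hF, hFvol, add_tsub_cancel_of_le hvolA_le]
  have hvolE_fin : volume E ≠ ⊤ := by rw [hvolE]; exact ENNReal.ofReal_ne_top
  have hnuE : ν E = volume E := by
    rw [hν, Measure.restrict_apply' measurableSet_Ioi, inter_eq_left.mpr hEsub]
  -- the function a
  refine ⟨E.indicator (fun _ => (1:ℝ)), (measurable_const).indicator hE, ?_, ?_, ?_⟩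
  · intro t
    by_cases ht : t ∈ E
    · rw [Set.indicator_of_mem ht]; exact ⟨zero_le_one, le_rfl⟩
    · rw [Set.indicator_of_notMem ht]; exact ⟨le_rfl, zero_le_one⟩
  · rw [integral_indicator_const (1:ℝ) hE]
    simp only [smul_eq_mul, mul_one]
    rw [measureReal_def, hnuE, hvolE, ENNReal.toReal_ofReal (le_of_lt hs)]
  · -- value
    have hfeq : (fun x => f' x * E.indicator (fun _ => (1:ℝ)) x) = E.indicator f' := by
      ext x
      by_cases hx : x ∈ E
      · rw [Set.indicator_of_mem hx, Set.indicator_of_mem hx, mul_one]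
      · rw [Set.indicator_of_notMem hx, Set.indicator_of_notMem hx, mul_zero]
    have hgE : ∀ x ∈ E, f' x = g x := by
      intro x hx
      have hgx : L ≤ g x := (hEB hx).1
      have : 0 < g x := lt_of_lt_of_le hpos hgx
      rw [hgdef]
      simp only
      rw [max_eq_left]
      by_contra hc
      push_neg at hc
      have : g x = 0 := by rw [hgdef]; simp only; rw [max_eq_right (le_of_lt hc)]
      linarith
    calc ∫ t in Set.Ioi (0:ℝ), f' t * E.indicator (fun _ => (1:ℝ)) t
        = ∫ x, E.indicator f' x ∂ν := by rw [hν]; exact integral_congr_ae (by rw [hfeq])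
    _ = ∫ x in E, f' x ∂ν := integral_indicator hE
    _ = ∫ x in E, g x ∂ν := setIntegral_congr_fun hE (fun x hx => hgE x hx)
    _ = ∫ x, E.indicator g x ∂ν := (integral_indicator hE).symm
    _ = (∫⁻ x, ENNReal.ofReal (E.indicator g x) ∂ν).toReal := by
        apply integral_eq_lintegral_of_nonneg_ae
        · filter_upwards with x
          by_cases hx : x ∈ E
          · rw [Set.indicator_of_mem hx]; exact h0 x
          · rw [Set.indicator_of_notMem hx]; simp
        · exact (hg.indicator hE).aestronglyMeasurable
    _ = (Phi g s).toReal := by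
        congr 1
        rw [lintegral_eq_lintegral_meas_lt ν ?nn (hg.indicator hE).aemeasurable]
        case nn =>
          filter_upwards with x
          by_cases hx : x ∈ E
          · rw [Set.indicator_of_mem hx]; exact h0 x
          · rw [Set.indicator_of_notMem hx]; simp
        apply setLIntegral_congr_fun measurableSet_Ioi
        intro l hl
        dsimp only
        have hlpos : (0:ℝ) < l := hl
        have hseteq : {x | l < E.indicator g x} = E ∩ {x | l < g x} := by
          ext x
          simp only [mem_inter_iff, mem_setOf_eq]
          by_cases hx : x ∈ E
          · rw [Set.indicator_of_mem hx]; tauto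
          · rw [Set.indicator_of_notMem hx]
            constructor
            · intro h; linarith
            · tauto
        rw [hν, Measure.restrict_apply' measurableSet_Ioi, hseteq]
        have hEIoi : E ∩ {x | l < g x} ∩ Set.Ioi 0 = E ∩ {x | l < g x} :=
          inter_eq_left.mpr (fun x hx => hEsub hx.1)
        rw [hEIoi]
        rcases le_or_gt L l with hcase | hcase
        · -- l ≥ L : E ∩ {l < g} = {l < g} ∩ Ioi 0
          have h1 : E ∩ {x | l < g x} = {x | l < g x} ∩ Set.Ioi 0 := by
            apply Subset.antisymm
            · rintro x ⟨hx1, hx2⟩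
              exact ⟨hx2, hEsub hx1⟩
            · rintro x ⟨hx1, hx2⟩
              refine ⟨Or.inl ⟨?_, hx2⟩, hx1⟩
              simp only [mem_setOf_eq]
              exact lt_of_le_of_lt hcase hx1
          rw [h1]
          have h2 : DD g l ≤ ENNReal.ofReal s := le_trans (DD_anti g hcase) hDL
          rw [min_eq_right h2]
          rfl
        · -- l < L : E ⊆ {l < g}
          have h1 : E ∩ {x | l < g x} = E := by
            apply inter_eq_left.mpr
            intro x hx
            simp only [mem_setOf_eq]
            exact lt_of_lt_of_le hcase (hEB hx).1
          rw [h1, hvolE, min_eq_left (le_of_lt (hDlt l (le_of_lt hlpos) hcase))]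

lemma lower_bound_zero {f' : ℝ → ℝ} (hf' : Measurable f') (hfi : IntegrableOn f' (Set.Ioi 0))
    {s : ℝ} (hs : 0 < s)
    (hzero : rD (fun x => max (f' x) 0) s = 0) {ε : ℝ} (hε : 0 < ε) :
    ∃ a : ℝ → ℝ, Measurable a ∧ (∀ t, a t ∈ Set.Icc (0:ℝ) 1) ∧
      (∫ t in Set.Ioi (0:ℝ), a t) = s ∧
      (Phi (fun x => max (f' x) 0) s).toReal - ε ≤ ∫ t in Set.Ioi (0:ℝ), f' t * a t := by
  set ν := volume.restrict (Set.Ioi (0:ℝ)) with hν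
  set g : ℝ → ℝ := fun x => max (f' x) 0 with hgdef
  have hg : Measurable g := hf'.max measurable_const
  have h0 : ∀ x, 0 ≤ g x := fun x => le_max_right _ _
  have hgabs : ∀ x, ‖g x‖ ≤ ‖f' x‖ := by
    intro x
    rw [Real.norm_eq_abs, Real.norm_eq_abs, abs_of_nonneg (h0 x)]
    exact max_le (le_abs_self _) (abs_nonneg _)
  have hgi : IntegrableOn g (Set.Ioi 0) := by
    apply Integrable.mono hfi hg.aestronglyMeasurable
    filter_upwards with x
    exact hgabs x
  have hD0 : DD g 0 ≤ ENNReal.ofReal s :=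
    (rD_le_iff hg.aemeasurable hgi hs le_rfl).mp (le_of_eq hzero)
  -- Phi g s = ∫⁻ ofReal g
  have hPhi : Phi g s = ∫⁻ x, ENNReal.ofReal (g x) ∂ν := by
    rw [← Psi_eq hg.aemeasurable h0]
    apply setLIntegral_congr_fun measurableSet_Ioi
    intro l hl
    exact min_eq_right (le_trans (DD_anti g (le_of_lt hl)) hD0)
  have hPhiReal : (Phi g s).toReal = ∫ x, g x ∂ν := by
    rw [hPhi, ← integral_eq_lintegral_of_nonneg_ae
      (Filter.Eventually.of_forall h0) hg.aestronglyMeasurable]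
  set A : Set ℝ := {x | 0 < g x} ∩ Set.Ioi 0 with hAdef
  have hA : MeasurableSet A := (measurableSet_lt measurable_const hg).inter measurableSet_Ioi
  have hvolA_le : volume A ≤ ENNReal.ofReal s := hD0
  have hvolA_fin : volume A ≠ ⊤ := (lt_of_le_of_lt hvolA_le ENNReal.ofReal_lt_top).ne
  set α : ℝ := (volume A).toReal with hα
  have hα_le : α ≤ s := by
    rw [hα, ← ENNReal.toReal_ofReal (le_of_lt hs)]
    exact ENNReal.toReal_mono ENNReal.ofReal_ne_top hvolA_le
  have hα0 : 0 ≤ α := ENNReal.toReal_nonneg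
  set I : ℝ := ∫ x, |f' x| ∂ν with hI
  have hI0 : 0 ≤ I := integral_nonneg (fun x => abs_nonneg _)
  have hfabs_int : Integrable (fun x => |f' x|) ν := hfi.abs
  set c : ℝ := min 1 (ε / (1 + I)) with hc
  have hc0 : 0 < c := lt_min one_pos (div_pos hε (by linarith))
  have hc1 : c ≤ 1 := min_le_left _ _
  have hcI : c * I ≤ ε := by
    have h1 : c ≤ ε / (1 + I) := min_le_right _ _
    have h2 : c * I ≤ (ε / (1+I)) * I := mul_le_mul_of_nonneg_right h1 hI0
    have h3 : (ε / (1+I)) * I ≤ ε := by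
      rw [div_mul_eq_mul_div, div_le_iff₀ (by linarith : (0:ℝ) < 1 + I)]
      nlinarith
    linarith
  -- sliver set F inside (Ioi 0) \ A
  have hEsub : Set.Ioi (0:ℝ) \ A ⊆ Set.Ioi 0 := diff_subset
  have hvol_diff : volume (Set.Ioi (0:ℝ) \ A) = ⊤ := by
    by_contra h
    have h1 : volume (Set.Ioi (0:ℝ)) ≤ volume (Set.Ioi (0:ℝ) \ A) + volume A := by
      calc volume (Set.Ioi (0:ℝ)) = volume ((Set.Ioi (0:ℝ) \ A) ∪ (Set.Ioi 0 ∩ A)) := by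
            congr 1
            rw [diff_union_inter]
      _ ≤ volume (Set.Ioi (0:ℝ) \ A) + volume (Set.Ioi 0 ∩ A) := measure_union_le _ _
      _ ≤ volume (Set.Ioi (0:ℝ) \ A) + volume A :=
            add_le_add le_rfl (measure_mono inter_subset_right)
    rw [Real.volume_Ioi] at h1
    exact (lt_of_le_of_lt h1 (by
      apply ENNReal.add_lt_top.mpr
      exact ⟨lt_top_iff_ne_top.mpr h, lt_top_iff_ne_top.mpr hvolA_fin⟩)).ne rfl
  set r : ℝ≥0∞ := ENNReal.ofReal ((s - α)/c) with hr
  obtain ⟨F, hFsub, hF, hFvol⟩ := exists_subset_volume_eq (r := r)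
    (measurableSet_Ioi.diff hA) hEsub (by rw [hvol_diff]; exact le_top)
    (by rw [hr]; exact ENNReal.ofReal_ne_top)
  have hFIoi : F ⊆ Set.Ioi 0 := fun x hx => (hFsub hx).1
  have hFA : ∀ x ∈ F, x ∉ A := fun x hx => (hFsub hx).2
  have hvolF_fin : volume F ≠ ⊤ := by rw [hFvol]; exact ENNReal.ofReal_ne_top
  have hvolF_toReal : (volume F).toReal = (s - α)/c := by
    rw [hFvol, hr, ENNReal.toReal_ofReal (div_nonneg (sub_nonneg.mpr hα_le) (le_of_lt hc0))]
  -- the function a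
  set a : ℝ → ℝ := fun x => A.indicator (fun _ => (1:ℝ)) x + c * F.indicator (fun _ => (1:ℝ)) x
    with ha
  have haM : Measurable a :=
    (measurable_const.indicator hA).add ((measurable_const.indicator hF).const_mul c)
  have hdisj : ∀ x, x ∈ A → x ∉ F := fun x hx hxF => hFA x hxF hx
  have haval : ∀ x, a x ∈ Set.Icc (0:ℝ) 1 := by
    intro x
    rw [ha]
    simp only
    by_cases hxA : x ∈ A
    · rw [Set.indicator_of_mem hxA, Set.indicator_of_notMem (hdisj x hxA), mul_zero, add_zero]
      exact ⟨zero_le_one, le_rfl⟩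
    · rw [Set.indicator_of_notMem hxA, zero_add]
      by_cases hxF : x ∈ F
      · rw [Set.indicator_of_mem hxF, mul_one]
        exact ⟨le_of_lt hc0, hc1⟩
      · rw [Set.indicator_of_notMem hxF, mul_zero]
        exact ⟨le_rfl, zero_le_one⟩
  have hnuA : ν A = volume A := by
    rw [hν, Measure.restrict_apply' measurableSet_Ioi, inter_eq_left.mpr
      (fun x (hx : x ∈ A) => hx.2)]
  have hnuF : ν F = volume F := by
    rw [hν, Measure.restrict_apply' measurableSet_Ioi, inter_eq_left.mpr hFIoi]
  have hintA : Integrable (A.indicator (fun _ => (1:ℝ))) ν := by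
    rw [integrable_indicator_iff hA]
    apply (integrableOn_const_iff (C := (1:ℝ)) (by simp)).mpr
    right
    rw [Measure.restrict_apply' measurableSet_Ioi]
    exact lt_of_le_of_lt (measure_mono inter_subset_left) (lt_top_iff_ne_top.mpr hvolA_fin)
  have hintF : Integrable (F.indicator (fun _ => (1:ℝ))) ν := by
    rw [integrable_indicator_iff hF]
    apply (integrableOn_const_iff (C := (1:ℝ)) (by simp)).mpr
    right
    rw [Measure.restrict_apply' measurableSet_Ioi]
    exact lt_of_le_of_lt (measure_mono inter_subset_left) (lt_top_iff_ne_top.mpr hvolF_fin)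
  refine ⟨a, haM, haval, ?_, ?_⟩
  · -- integral of a is s
    have : ∫ x, a x ∂ν = α + c * ((s - α)/c) := by
      rw [ha]
      simp only
      rw [integral_add hintA (hintF.const_mul c), MeasureTheory.integral_const_mul,
        integral_indicator_const (1:ℝ) hA, integral_indicator_const (1:ℝ) hF,
        measureReal_def, measureReal_def, hnuA, hnuF, hvolF_toReal]
      simp [hα]
    rw [hν] at this ⊢
    rw [this, mul_div_cancel₀ _ (ne_of_gt hc0)]
    ring
  · -- value bound
    have hsplit : ∀ x, f' x * a x
        = A.indicator f' x + c * F.indicator f' x := by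
      intro x
      rw [ha]
      simp only
      by_cases hxA : x ∈ A
      · rw [Set.indicator_of_mem hxA, Set.indicator_of_mem hxA,
          Set.indicator_of_notMem (hdisj x hxA), Set.indicator_of_notMem (hdisj x hxA)]
        ring
      · rw [Set.indicator_of_notMem hxA, Set.indicator_of_notMem hxA]
        by_cases hxF : x ∈ F
        · rw [Set.indicator_of_mem hxF, Set.indicator_of_mem hxF]; ring
        · rw [Set.indicator_of_notMem hxF, Set.indicator_of_notMem hxF]; ring
    have hintAf : Integrable (A.indicator f') ν := by
      rw [integrable_indicator_iff hA]
      exact hfi.integrable.integrableOn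
    have hintFf : Integrable (F.indicator f') ν := by
      rw [integrable_indicator_iff hF]
      exact hfi.integrable.integrableOn
    have hval : ∫ x, f' x * a x ∂ν
        = (∫ x, A.indicator f' x ∂ν) + c * ∫ x, F.indicator f' x ∂ν := by
      calc ∫ x, f' x * a x ∂ν = ∫ x, (A.indicator f' x + c * F.indicator f' x) ∂ν :=
            integral_congr_ae (Filter.Eventually.of_forall hsplit)
      _ = _ := by rw [integral_add hintAf (hintFf.const_mul c), MeasureTheory.integral_const_mul]
    -- ∫ A.indicator f' = ∫ g
    have hAg : ∫ x, A.indicator f' x ∂ν = ∫ x, g x ∂ν := by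
      apply integral_congr_ae
      have hae : ∀ᵐ x ∂ν, x ∈ Set.Ioi (0:ℝ) := ae_restrict_mem measurableSet_Ioi
      filter_upwards [hae] with x hx
      by_cases hgx : 0 < g x
      · have hxA : x ∈ A := ⟨hgx, hx⟩
        rw [Set.indicator_of_mem hxA]
        rw [hgdef]
        simp only
        rw [max_eq_left]
        by_contra hcon
        push_neg at hcon
        have : g x = 0 := by rw [hgdef]; simp only; rw [max_eq_right (le_of_lt hcon)]
        linarith
      · have hgx0 : g x = 0 := le_antisymm (not_lt.mp hgx) (h0 x)
        have hxA : x ∉ A := fun hxA => hgx hxA.1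
        rw [Set.indicator_of_notMem hxA, hgx0]
    -- |∫ F.indicator f'| ≤ I
    have hFbound : |∫ x, F.indicator f' x ∂ν| ≤ I := by
      have h1 : |∫ x, F.indicator f' x ∂ν| ≤ ∫ x, |F.indicator f' x| ∂ν := by
        simpa [Real.norm_eq_abs] using
          norm_integral_le_integral_norm (μ := ν) (f := F.indicator f')
      have h2 : ∫ x, |F.indicator f' x| ∂ν ≤ ∫ x, |f' x| ∂ν := by
        apply integral_mono hintFf.abs hfabs_int
        intro x
        simp only [Set.indicator_apply]
        by_cases hxF : x ∈ F
        · simp [hxF]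
        · simp [hxF, abs_nonneg]
      linarith
    have : (Phi g s).toReal - ε ≤ (∫ x, g x ∂ν) + c * ∫ x, F.indicator f' x ∂ν := by
      rw [hPhiReal]
      have h1 : -(c * I) ≤ c * ∫ x, F.indicator f' x ∂ν := by
        have h2 : -I ≤ ∫ x, F.indicator f' x ∂ν := neg_le_of_abs_le hFbound
        calc -(c*I) = c * (-I) := by ring
        _ ≤ c * ∫ x, F.indicator f' x ∂ν := mul_le_mul_of_nonneg_left h2 (le_of_lt hc0)
      linarith
    rw [hν] at hval this ⊢
    rw [hval, hAg]
    exact this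

/-- Decreasing rearrangement of `|f|` with respect to Lebesgue measure on `(0,∞)`. -/
noncomputable def rearr (f : ℝ → ℝ) (t : ℝ) : ℝ :=
  sInf {s : ℝ | 0 ≤ s ∧ (volume.restrict (Set.Ioi (0:ℝ))) {x | s < |f x|} ≤ ENNReal.ofReal t}

/-- Positive part of a function. -/
noncomputable def posPart' (f : ℝ → ℝ) : ℝ → ℝ := fun t => max (f t) 0

/-- Negative part of a function. -/
noncomputable def negPart' (f : ℝ → ℝ) : ℝ → ℝ := fun t => max (-f t) 0

/-- Hardy–Littlewood–Pólya submajorization on `(0,∞)`. -/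
def SubMaj (f g : ℝ → ℝ) : Prop :=
  ∀ t : ℝ, 0 ≤ t →
    (∫ s in Set.Ioc (0:ℝ) t, rearr f s) ≤ ∫ s in Set.Ioc (0:ℝ) t, rearr g s

/-- Hardy–Littlewood–Pólya majorization on `(0,∞)`:
`f₊ ≺≺ g₊`, `f₋ ≺≺ g₋` and `∫ f = ∫ g`. -/
def Maj (f g : ℝ → ℝ) : Prop :=
  SubMaj (posPart' f) (posPart' g) ∧ SubMaj (negPart' f) (negPart' g) ∧
    (∫ t in Set.Ioi (0:ℝ), f t) = ∫ t in Set.Ioi (0:ℝ), g t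

/-- `∫₀ˢ μ(t; f₊) dt = sup { ∫ f·a dm : a measurable, 0 ≤ a ≤ 1, ∫ a dm = s }`. -/
theorem stmt7 (f : ℝ → ℝ) (hf : IntegrableOn f (Set.Ioi 0)) (s : ℝ) (hs : 0 < s) :
    (∫ t in Set.Ioc (0:ℝ) s, rearr (posPart' f) t) =
      sSup {r : ℝ | ∃ a : ℝ → ℝ, Measurable a ∧ (∀ t, a t ∈ Set.Icc (0:ℝ) 1) ∧
        (∫ t in Set.Ioi (0:ℝ), a t) = s ∧ r = ∫ t in Set.Ioi (0:ℝ), f t * a t} := by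
  set ν := volume.restrict (Set.Ioi (0:ℝ)) with hν
  have hae : AEMeasurable f ν := hf.aemeasurable
  set f' : ℝ → ℝ := hae.mk f with hf'def
  have hf'm : Measurable f' := hae.measurable_mk
  have hff' : f =ᵐ[ν] f' := hae.ae_eq_mk
  have hfi' : IntegrableOn f' (Set.Ioi 0) := hf.congr hff'
  set g : ℝ → ℝ := fun x => max (f' x) 0 with hgdef
  have hg : Measurable g := hf'm.max measurable_const
  have h0 : ∀ x, 0 ≤ g x := fun x => le_max_right _ _
  have hgi : IntegrableOn g (Set.Ioi 0) := by
    apply Integrable.mono hfi' hg.aestronglyMeasurable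
    filter_upwards with x
    rw [Real.norm_eq_abs, Real.norm_eq_abs, abs_of_nonneg (h0 x)]
    exact max_le (le_abs_self _) (abs_nonneg _)
  -- rearr (posPart' f) = rD g
  have hrearr : ∀ t : ℝ, rearr (posPart' f) t = rD g t := by
    intro t
    unfold rearr rD
    congr 1
    ext l
    simp only [mem_setOf_eq, and_congr_right_iff]
    intro hl
    have hmeas : ν {x | l < |posPart' f x|} = DD g l := by
      rw [DD_eq_nu]
      apply measure_congr
      filter_upwards [hff'] with x hx
      have h1 : |posPart' f x| = max (f x) 0 := abs_of_nonneg (le_max_right _ _)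
      show (l < |posPart' f x|) = (l < g x)
      rw [h1, hx]
    rw [hmeas]
  have hLHS : (∫ t in Set.Ioc (0:ℝ) s, rearr (posPart' f) t) = (Phi g s).toReal := by
    rw [setIntegral_congr_fun measurableSet_Ioc (fun t _ => hrearr t)]
    exact integral_rD hg.aemeasurable h0 hgi hs
  set S := {r : ℝ | ∃ a : ℝ → ℝ, Measurable a ∧ (∀ t, a t ∈ Set.Icc (0:ℝ) 1) ∧
    (∫ t in Set.Ioi (0:ℝ), a t) = s ∧ r = ∫ t in Set.Ioi (0:ℝ), f t * a t} with hS
  have hfa_congr : ∀ a : ℝ → ℝ, (∫ t in Set.Ioi (0:ℝ), f t * a t)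
      = ∫ t in Set.Ioi (0:ℝ), f' t * a t := by
    intro a
    apply integral_congr_ae
    filter_upwards [hff'] with x hx
    rw [hx]
  have hub : ∀ r ∈ S, r ≤ (Phi g s).toReal := by
    rintro r ⟨a, haM, ha01, has, rfl⟩
    rw [hfa_congr a]
    exact upper_bound hf'm hfi' hs haM ha01 has
  have hne : S.Nonempty := by
    refine ⟨∫ t in Set.Ioi (0:ℝ), f t * (Set.Ioc (0:ℝ) s).indicator (fun _ => (1:ℝ)) t,
      (Set.Ioc (0:ℝ) s).indicator (fun _ => (1:ℝ)), measurable_const.indicator measurableSet_Ioc,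
      ?_, ?_, rfl⟩
    · intro t
      by_cases ht : t ∈ Set.Ioc (0:ℝ) s
      · rw [Set.indicator_of_mem ht]; exact ⟨zero_le_one, le_rfl⟩
      · rw [Set.indicator_of_notMem ht]; exact ⟨le_rfl, zero_le_one⟩
    · rw [integral_indicator_const (1:ℝ) measurableSet_Ioc]
      simp only [smul_eq_mul, mul_one]
      rw [measureReal_def, Measure.restrict_apply' measurableSet_Ioi]
      have : Set.Ioc (0:ℝ) s ∩ Set.Ioi 0 = Set.Ioc 0 s :=
        inter_eq_left.mpr (fun x hx => hx.1)
      rw [this, Real.volume_Ioc, sub_zero, ENNReal.toReal_ofReal (le_of_lt hs)]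
  have hbdd : BddAbove S := ⟨(Phi g s).toReal, hub⟩
  rw [hLHS]
  apply le_antisymm
  · -- Phi ≤ sSup S
    apply le_of_forall_pos_le_add
    intro ε hε
    rcases (rD_nonneg g s).lt_or_eq with hpos | hzero
    · obtain ⟨a, haM, ha01, has, hval⟩ := lower_bound_pos hf'm hfi' hs hpos
      have hmem : (∫ t in Set.Ioi (0:ℝ), f t * a t) ∈ S := ⟨a, haM, ha01, has, rfl⟩
      calc (Phi g s).toReal = ∫ t in Set.Ioi (0:ℝ), f t * a t := by
            rw [hfa_congr a, hval]
      _ ≤ sSup S := le_csSup hbdd hmem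
      _ ≤ sSup S + ε := by linarith
    · obtain ⟨a, haM, ha01, has, hval⟩ := lower_bound_zero hf'm hfi' hs hzero.symm hε
      have hmem : (∫ t in Set.Ioi (0:ℝ), f t * a t) ∈ S := ⟨a, haM, ha01, has, rfl⟩
      have h1 : (Phi g s).toReal - ε ≤ ∫ t in Set.Ioi (0:ℝ), f t * a t := by
        rw [hfa_congr a]
        exact hval
      calc (Phi g s).toReal ≤ (∫ t in Set.Ioi (0:ℝ), f t * a t) + ε := by linarith
      _ ≤ sSup S + ε := by linarith [le_csSup hbdd hmem]
  · exact csSup_le hne hub
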